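/- Generating-polynomial formula for the (r,s)-Lah distribution: for all n ∈ ℕ, k ∈ {0,…,n}, reals r, s ≥ 0 and any t, Σ_{j=k}^n S1_r(n,j) S2_s(j,k) t^j equals (n!/k!) times the coefficient of x^n in ((1−x)^{−t} − 1)^k (1−x)^{−(st+r)}. -/

import Mathlib

open Polynomial Finset PowerSeries

/-- The `r`-Stirling number of the first kind, defined as `(1/k!)` times the `k`-th
derivative in `r` of the rising factorial `r^{n↑}`. -/
noncomputable def S1r (r : ℝ) (n k : ℕ) : ℝ :=
  (1 / (k.factorial : ℝ)) * deriv^[k] (fun x : ℝ => (ascPochhammer ℝ n).eval x) r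

/-- The forward finite difference operator `(Δ f)(r) = f (r+1) - f r`. -/
def fdiff (f : ℝ → ℝ) : ℝ → ℝ := fun r => f (r + 1) - f r

/-- The `r`-Stirling number of the second kind, `(1/k!) Δ^k (r^n)`. -/
noncomputable def S2r (r : ℝ) (n k : ℕ) : ℝ :=
  (1 / (k.factorial : ℝ)) * (fdiff^[k] (fun x : ℝ => x ^ n)) r

/-- The formal power series `(1-x)^{-t}` for real `t`, with coefficients `t^{b↑}/b!`. -/
noncomputable def invOneSub (t : ℝ) : PowerSeries ℝ :=
  PowerSeries.mk fun b => (ascPochhammer ℝ b).eval t / (b.factorial : ℝ)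

-- Vandermonde for ascPochhammer
lemma asc_add_eval (n : ℕ) (a b : ℝ) :
    (ascPochhammer ℝ n).eval (a + b) =
      ∑ j ∈ range (n+1), (n.choose j : ℝ) * (ascPochhammer ℝ j).eval a *
        (ascPochhammer ℝ (n-j)).eval b := by
  induction n with
  | zero => simp
  | succ n ih =>
    set A : ℕ → ℝ := fun j => (ascPochhammer ℝ j).eval a with hA
    set B : ℕ → ℝ := fun j => (ascPochhammer ℝ j).eval b with hB
    have hAs : ∀ j : ℕ, A (j+1) = A j * (a + j) := fun j => ascPochhammer_succ_eval j a
    have hBs : ∀ j : ℕ, B (j+1) = B j * (b + j) := fun j => ascPochhammer_succ_eval j b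
    rw [ascPochhammer_succ_eval, ih, sum_mul]
    have hsplit : ∀ j ∈ range (n+1),
        (n.choose j : ℝ) * A j * B (n-j) * (a + b + n) =
          (n.choose j : ℝ) * A (j+1) * B (n-j) + (n.choose j : ℝ) * A j * B (n-j+1) := by
      intro j hj
      have hjn : j ≤ n := Nat.lt_succ_iff.mp (mem_range.mp hj)
      have hc : ((n - j : ℕ) : ℝ) = (n : ℝ) - j := by
        push_cast [hjn]; ring
      rw [hAs, hBs, hc]
      ring
    rw [sum_congr rfl hsplit, sum_add_distrib]
    -- RHS manipulation
    have hR : ∑ j ∈ range (n+2), ((n+1).choose j : ℝ) * A j * B (n+1-j) =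
        (∑ j ∈ range (n+1), ((n+1).choose (j+1) : ℝ) * A (j+1) * B (n-j)) + B (n+1) := by
      rw [Finset.sum_range_succ']
      simp [A, B]
    rw [hR]
    have hP : ∀ j ∈ range (n+1),
        ((n+1).choose (j+1) : ℝ) * A (j+1) * B (n-j) =
          (n.choose j : ℝ) * A (j+1) * B (n-j) + (n.choose (j+1) : ℝ) * A (j+1) * B (n-j) := by
      intro j _
      rw [Nat.choose_succ_succ]
      push_cast; ring
    rw [sum_congr rfl hP, sum_add_distrib]
    have hSb : ∑ j ∈ range (n+1), (n.choose j : ℝ) * A j * B (n-j+1) =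
        (∑ j ∈ range (n+1), (n.choose (j+1) : ℝ) * A (j+1) * B (n-j)) + B (n+1) := by
      have h2 : ∑ j ∈ range (n+1), (n.choose j : ℝ) * A j * B (n-j+1) =
          ∑ j ∈ range (n+1), (n.choose j : ℝ) * A j * B (n+1-j) := by
        refine sum_congr rfl fun j hj => ?_
        have hjn : j ≤ n := Nat.lt_succ_iff.mp (mem_range.mp hj)
        rw [Nat.sub_add_comm hjn]
      rw [h2, Finset.sum_range_succ']
      have h3 : ∑ j ∈ range n, (n.choose (j+1) : ℝ) * A (j+1) * B (n+1-(j+1)) =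
          ∑ j ∈ range (n+1), (n.choose (j+1) : ℝ) * A (j+1) * B (n-j) := by
        rw [Finset.sum_range_succ, Nat.choose_succ_self]
        simp [Nat.succ_sub_succ]
      rw [← h3]
      simp [A, B]
    rw [hSb]
    ring

lemma coeff_invOneSub (t : ℝ) (m : ℕ) :
    PowerSeries.coeff m (invOneSub t) = (ascPochhammer ℝ m).eval t / (m.factorial : ℝ) :=
  PowerSeries.coeff_mk m _

lemma invOneSub_zero : invOneSub 0 = 1 := by
  ext m
  rw [coeff_invOneSub, PowerSeries.coeff_one]
  rcases m with _ | m <;> simp [ascPochhammer_eval_zero]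

lemma invOneSub_mul (a b : ℝ) : invOneSub a * invOneSub b = invOneSub (a + b) := by
  ext m
  rw [PowerSeries.coeff_mul, Finset.Nat.sum_antidiagonal_eq_sum_range_succ_mk,
    coeff_invOneSub, asc_add_eval, Finset.sum_div]
  refine sum_congr rfl fun j hj => ?_
  have hjm : j ≤ m := Nat.lt_succ_iff.mp (mem_range.mp hj)
  rw [coeff_invOneSub, coeff_invOneSub, Nat.cast_choose ℝ hjm]
  have h1 : (j.factorial : ℝ) ≠ 0 := Nat.cast_ne_zero.mpr j.factorial_ne_zero
  have h2 : ((m - j).factorial : ℝ) ≠ 0 := Nat.cast_ne_zero.mpr (m - j).factorial_ne_zero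
  have h3 : (m.factorial : ℝ) ≠ 0 := Nat.cast_ne_zero.mpr m.factorial_ne_zero
  field_simp

lemma invOneSub_pow (t : ℝ) (i : ℕ) : invOneSub t ^ i = invOneSub (i * t) := by
  induction i with
  | zero => simp [invOneSub_zero.symm]
  | succ i ih =>
    rw [pow_succ, ih, invOneSub_mul]
    push_cast; ring_nf

-- Taylor expansion lemmas
lemma iter_deriv_polyeval (j : ℕ) (p : ℝ[X]) :
    deriv^[j] (fun x : ℝ => p.eval x) = fun x => ((Polynomial.derivative)^[j] p).eval x := by
  induction j generalizing p with
  | zero => simp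
  | succ j ih =>
    rw [Function.iterate_succ_apply, Function.iterate_succ_apply]
    rw [show deriv (fun x : ℝ => p.eval x) = fun x => p.derivative.eval x from
      funext fun x => p.deriv]
    exact ih _

lemma S1r_eq_taylor (r : ℝ) (n j : ℕ) :
    S1r r n j = (Polynomial.taylor r (ascPochhammer ℝ n)).coeff j := by
  rw [Polynomial.taylor_coeff, S1r, iter_deriv_polyeval]
  have h := Polynomial.factorial_smul_hasseDeriv (R := ℝ) j
  have h2 : (Polynomial.derivative (R := ℝ))^[j] (ascPochhammer ℝ n) =
      j.factorial • (Polynomial.hasseDeriv j (ascPochhammer ℝ n)) := by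
    rw [← h]; simp
  rw [h2]
  have h1 : (j.factorial : ℝ) ≠ 0 := Nat.cast_ne_zero.mpr j.factorial_ne_zero
  simp only [Polynomial.eval_smul, nsmul_eq_mul]
  field_simp
  rw [Polynomial.eval_natCast_mul]

lemma sum_S1r (r u : ℝ) (n : ℕ) :
    ∑ j ∈ range (n+1), S1r r n j * u ^ j = (ascPochhammer ℝ n).eval (r + u) := by
  have hdeg : (Polynomial.taylor r (ascPochhammer ℝ n)).natDegree < n + 1 := by
    rw [Polynomial.natDegree_taylor, ascPochhammer_natDegree]
    exact Nat.lt_succ_self n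
  have := Polynomial.eval_eq_sum_range' hdeg u
  rw [Polynomial.taylor_eval] at this
  rw [show r + u = u + r from add_comm r u, this]
  exact sum_congr rfl fun j _ => by rw [S1r_eq_taylor]

-- S2r formulas
lemma fdiff_eq_fwdDiff : fdiff = fwdDiff (1 : ℝ) := rfl

lemma S2r_eq_sum (s : ℝ) (j k : ℕ) :
    S2r s j k = (1 / (k.factorial : ℝ)) *
      ∑ i ∈ range (k+1), (-1 : ℝ) ^ (k-i) * (k.choose i : ℝ) * (s + i) ^ j := by
  rw [S2r, fdiff_eq_fwdDiff, fwdDiff_iter_eq_sum_shift]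
  congr 1
  refine sum_congr rfl fun i _ => ?_
  rw [zsmul_eq_mul]
  push_cast
  ring_nf

lemma fdiff_iter_zero (k : ℕ) : fdiff^[k] (fun _ : ℝ => (0:ℝ)) = fun _ => 0 := by
  induction k with
  | zero => rfl
  | succ k ih => rw [Function.iterate_succ_apply, show fdiff (fun _ : ℝ => (0:ℝ)) = fun _ => 0 by
      funext x; simp [fdiff]]; exact ih

lemma fdiff_polyeval (p : ℝ[X]) :
    fdiff (fun x : ℝ => p.eval x) = fun x => (p.comp (Polynomial.X + 1) - p).eval x := by
  funext x
  simp [fdiff, Polynomial.eval_comp]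

lemma natDegree_comp_sub_lt (p : ℝ[X]) (hp : 0 < p.natDegree) :
    (p.comp (Polynomial.X + 1) - p).natDegree < p.natDegree := by
  have hp0 : p ≠ 0 := fun h => by simp [h] at hp
  have hX : (Polynomial.X + 1 : ℝ[X]) = Polynomial.X + Polynomial.C 1 := by simp
  have hnd : (p.comp (Polynomial.X + 1)).natDegree = p.natDegree := by
    rw [Polynomial.natDegree_comp, hX, Polynomial.natDegree_X_add_C, mul_one]
  have hlc : (p.comp (Polynomial.X + 1)).leadingCoeff = p.leadingCoeff := by
    rw [Polynomial.leadingCoeff_comp (by rw [hX, Polynomial.natDegree_X_add_C]; exact one_ne_zero)]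
    rw [hX, Polynomial.leadingCoeff_X_add_C, one_pow, mul_one]
  have hc0 : p.comp (Polynomial.X + 1) ≠ 0 := by
    intro h
    apply hp0
    rw [← Polynomial.leadingCoeff_eq_zero, ← hlc, h, Polynomial.leadingCoeff_zero]
  have hdeq : (p.comp (Polynomial.X + 1)).degree = p.degree := by
    rw [Polynomial.degree_eq_natDegree hc0, Polynomial.degree_eq_natDegree hp0, hnd]
  have hlt := Polynomial.degree_sub_lt hdeq hc0 hlc
  by_cases h0 : p.comp (Polynomial.X + 1) - p = 0
  · rw [h0]; simpa using hp
  · have := Polynomial.natDegree_lt_natDegree h0 (by rwa [hdeq] at hlt)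
    omega

lemma fdiff_iter_poly_zero : ∀ (k : ℕ) (p : ℝ[X]), p.natDegree < k →
    fdiff^[k] (fun x : ℝ => p.eval x) = fun _ => 0 := by
  intro k
  induction k with
  | zero => exact fun p h => absurd h (Nat.not_lt_zero _)
  | succ k ih =>
    intro p h
    rw [Function.iterate_succ_apply, fdiff_polyeval]
    by_cases hd : 0 < p.natDegree
    · exact ih _ (lt_of_lt_of_le (natDegree_comp_sub_lt p hd) (by omega))
    · have h0 : p.natDegree = 0 := by omega
      obtain ⟨c, rfl⟩ := Polynomial.natDegree_eq_zero.mp h0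
      have : (Polynomial.C c).comp (Polynomial.X + 1) - Polynomial.C c = (0 : ℝ[X]) := by simp
      rw [this]
      simpa using fdiff_iter_zero k

lemma S2r_eq_zero (s : ℝ) {j k : ℕ} (h : j < k) : S2r s j k = 0 := by
  rw [S2r]
  have : (fun x : ℝ => x ^ j) = fun x : ℝ => (Polynomial.X ^ j : ℝ[X]).eval x := by
    funext x; simp
  rw [this, fdiff_iter_poly_zero k (Polynomial.X ^ j) (by simpa [Polynomial.natDegree_X_pow] using h)]
  simp

theorem rs_Lah_generating_polynomial (n k : ℕ) (hn : 1 ≤ n) (hk : k ≤ n)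
    (r s : ℝ) (hr : 0 ≤ r) (hs : 0 ≤ s) (t : ℝ) :
    ∑ j ∈ Finset.Icc k n, S1r r n j * S2r s j k * t ^ j =
      ((n.factorial : ℝ) / (k.factorial : ℝ)) *
        PowerSeries.coeff n ((invOneSub t - 1) ^ k * invOneSub (s * t + r)) := by
  have hkf : (k.factorial : ℝ) ≠ 0 := Nat.cast_ne_zero.mpr k.factorial_ne_zero
  have hnf : (n.factorial : ℝ) ≠ 0 := Nat.cast_ne_zero.mpr n.factorial_ne_zero
  set f : ℕ → ℝ := fun j => S1r r n j * S2r s j k * t ^ j with hf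
  -- Step 1: extend the sum to `range (n+1)`
  have hstep1 : ∑ j ∈ Finset.Icc k n, f j = ∑ j ∈ range (n+1), f j := by
    have hz : ∑ j ∈ Finset.Ico 0 k, f j = 0 := by
      refine sum_eq_zero fun j hj => ?_
      have : j < k := (mem_Ico.mp hj).2
      simp [f, S2r_eq_zero s this]
    calc ∑ j ∈ Finset.Icc k n, f j = ∑ j ∈ Finset.Ico k (n+1), f j := by
          rw [Finset.Ico_add_one_right_eq_Icc]
      _ = ∑ j ∈ Finset.Ico 0 k, f j + ∑ j ∈ Finset.Ico k (n+1), f j := by rw [hz, zero_add]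
      _ = ∑ j ∈ Finset.Ico 0 (n+1), f j :=
          Finset.sum_Ico_consecutive f (Nat.zero_le k) (by omega)
      _ = ∑ j ∈ range (n+1), f j := by rw [range_eq_Ico]
  -- Step 2: LHS computation
  have hstep2 : ∑ j ∈ range (n+1), f j =
      ∑ i ∈ range (k+1), (1/(k.factorial:ℝ)) * ((-1:ℝ)^(k-i) * (k.choose i : ℝ) *
        (ascPochhammer ℝ n).eval (r + (s + (i:ℝ)) * t)) := by
    calc ∑ j ∈ range (n+1), f j
        = ∑ j ∈ range (n+1), ∑ i ∈ range (k+1), (1/(k.factorial:ℝ)) *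
            ((-1:ℝ)^(k-i) * (k.choose i : ℝ) * (S1r r n j * ((s + (i:ℝ)) * t) ^ j)) := by
          refine sum_congr rfl fun j _ => ?_
          simp only [f]
          rw [S2r_eq_sum, Finset.mul_sum, Finset.mul_sum, Finset.sum_mul]
          refine sum_congr rfl fun i _ => ?_
          rw [mul_pow]
          ring
      _ = ∑ i ∈ range (k+1), ∑ j ∈ range (n+1), (1/(k.factorial:ℝ)) *
            ((-1:ℝ)^(k-i) * (k.choose i : ℝ) * (S1r r n j * ((s + (i:ℝ)) * t) ^ j)) :=
          Finset.sum_comm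
      _ = _ := by
          refine sum_congr rfl fun i _ => ?_
          rw [← Finset.mul_sum, ← Finset.mul_sum, sum_S1r]
  -- Step 3: RHS computation
  have hRHS : PowerSeries.coeff n ((invOneSub t - 1) ^ k * invOneSub (s * t + r)) =
      ∑ i ∈ range (k+1), (-1:ℝ)^(i+k) * (k.choose i : ℝ) *
        ((ascPochhammer ℝ n).eval ((i:ℝ) * t + (s * t + r)) / (n.factorial : ℝ)) := by
    rw [sub_pow, Finset.sum_mul, map_sum]
    refine sum_congr rfl fun i _ => ?_
    have h1 : (-1 : ℝ⟦X⟧) ^ (i+k) * invOneSub t ^ i * (1:ℝ⟦X⟧) ^ (k-i) *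
          ((k.choose i : ℕ) : ℝ⟦X⟧) * invOneSub (s * t + r) =
        PowerSeries.C ((-1:ℝ)^(i+k) * (k.choose i : ℝ)) *
          (invOneSub ((i:ℝ) * t) * invOneSub (s * t + r)) := by
      rw [one_pow, invOneSub_pow, map_mul, map_pow, map_neg, map_one, map_natCast]
      ring
    rw [h1, invOneSub_mul, PowerSeries.coeff_C_mul, coeff_invOneSub]
  rw [hstep1, hstep2, hRHS, Finset.mul_sum]
  refine sum_congr rfl fun i hi => ?_
  have hik : i ≤ k := Nat.lt_succ_iff.mp (mem_range.mp hi)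
  have hsign : (-1:ℝ)^(i+k) = (-1:ℝ)^(k-i) := by
    have h : i + k = (k - i) + 2 * i := by omega
    rw [h, pow_add, pow_mul]
    simp
  have harg : r + (s + (i:ℝ)) * t = (i:ℝ) * t + (s * t + r) := by ring
  rw [harg, hsign]
  field_simp
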